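/- arXiv:2403.17415 — 4 statements merged into one kernel-verified Lean document; each statement's English description precedes it below -/
import Mathlib

section
/- Let n ≥ 1 and let U ⊆ ℝ^{n+1} be an open bounded convex set. There exist μ₀ = μ₀(n, U) ∈ (0,1) and C = C(n, U) > 0 such that for every C¹ metric g on U that is μ-flat with μ ∈ (0, μ₀), every X ∈ U at which g(X) = δ (the matrix (gᵢⱼ(X)) equals the identity), and every ρ > 0: B_{(1−Cμρ)ρ}(X) ∩ U ⊆ B^g_ρ(X) ⊆ B_{(1+Cμρ)ρ}(X). -/
open MeasureTheory Set

attribute [local instance] Matrix.frobeniusNormedAddCommGroup Matrix.frobeniusNormedSpace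

noncomputable section

/-- Frobenius norm of a real square matrix. -/
def frobNorm {m : ℕ} (M : Matrix (Fin m) (Fin m) ℝ) : ℝ :=
  Real.sqrt (∑ i, ∑ j, (M i j) ^ 2)

/-- The quadratic form `v ↦ Σᵢⱼ Aᵢⱼ vᵢ vⱼ` associated to a matrix. -/
def quadForm {m : ℕ} (A : Matrix (Fin m) (Fin m) ℝ) (v : EuclideanSpace ℝ (Fin m)) : ℝ :=
  ∑ i, ∑ j, A i j * v i * v j

/-- Euclidean norm `|Dg(X)| = √(Σᵢⱼₖ (∂gᵢⱼ/∂xₖ(X))²)` of the derivative of a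
matrix-valued map at a point (derivative taken within `U`). -/
def derivMetricNorm {m : ℕ} (g : EuclideanSpace ℝ (Fin m) → Matrix (Fin m) (Fin m) ℝ)
    (U : Set (EuclideanSpace ℝ (Fin m))) (X : EuclideanSpace ℝ (Fin m)) : ℝ :=
  Real.sqrt (∑ k, ∑ i, ∑ j, (fderivWithin ℝ g U X (EuclideanSpace.single k 1) i j) ^ 2)

/-- `g` is a `C¹` Riemannian metric on `U`: it is `C¹` and each `g X` is a
symmetric positive-definite matrix. -/
def IsC1Metric {m : ℕ} (g : EuclideanSpace ℝ (Fin m) → Matrix (Fin m) (Fin m) ℝ)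
    (U : Set (EuclideanSpace ℝ (Fin m))) : Prop :=
  ContDiffOn ℝ 1 g U ∧ ∀ X ∈ U, (g X).IsSymm ∧ (g X).PosDef

/-- `g` is `μ`-flat on `U`: `|g(X) − δ| ≤ μ` and `|Dg(X)| ≤ μ` for all `X ∈ U`. -/
def MuFlat {m : ℕ} (g : EuclideanSpace ℝ (Fin m) → Matrix (Fin m) (Fin m) ℝ)
    (U : Set (EuclideanSpace ℝ (Fin m))) (μ : ℝ) : Prop :=
  ∀ X ∈ U, frobNorm (g X - 1) ≤ μ ∧ derivMetricNorm g U X ≤ μ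

/-- Length of the curve `γ : [0,1] → ℝ^m` under the metric `g`. -/
def lengthG {m : ℕ} (g : EuclideanSpace ℝ (Fin m) → Matrix (Fin m) (Fin m) ℝ)
    (γ : ℝ → EuclideanSpace ℝ (Fin m)) : ℝ :=
  ∫ t in Set.Icc (0:ℝ) 1, Real.sqrt (quadForm (g (γ t)) (derivWithin γ (Set.Icc 0 1) t))

/-- Euclidean length of the curve `γ : [0,1] → ℝ^m`. -/
def lengthE {m : ℕ} (γ : ℝ → EuclideanSpace ℝ (Fin m)) : ℝ :=
  ∫ t in Set.Icc (0:ℝ) 1, ‖derivWithin γ (Set.Icc 0 1) t‖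


/-- Geodesic distance in `U` under the metric `g`: infimum of the `g`-length of
`C¹` curves in `U` joining `X` and `Y`. -/
def geodDist {m : ℕ} (g : EuclideanSpace ℝ (Fin m) → Matrix (Fin m) (Fin m) ℝ)
    (U : Set (EuclideanSpace ℝ (Fin m))) (X Y : EuclideanSpace ℝ (Fin m)) : ℝ :=
  sInf {L : ℝ | ∃ γ : ℝ → EuclideanSpace ℝ (Fin m),
    ContDiffOn ℝ 1 γ (Set.Icc 0 1) ∧ (∀ t ∈ Set.Icc (0:ℝ) 1, γ t ∈ U) ∧
    γ 0 = X ∧ γ 1 = Y ∧ L = lengthG g γ}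

/-- Geodesic ball `B^g_ρ(X) = {Y ∈ U : dist_g(X,Y) < ρ}`. -/
def geodBall {m : ℕ} (g : EuclideanSpace ℝ (Fin m) → Matrix (Fin m) (Fin m) ℝ)
    (U : Set (EuclideanSpace ℝ (Fin m))) (X : EuclideanSpace ℝ (Fin m)) (ρ : ℝ) :
    Set (EuclideanSpace ℝ (Fin m)) :=
  {Y ∈ U | geodDist g U X Y < ρ}

lemma frobNorm_eq_norm {m : ℕ} (M : Matrix (Fin m) (Fin m) ℝ) : frobNorm M = ‖M‖ := by
  rw [Matrix.frobenius_norm_def, frobNorm, Real.sqrt_eq_rpow]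
  norm_num [Real.norm_eq_abs, sq_abs]
lemma norm_sq_eq {m : ℕ} (v : EuclideanSpace ℝ (Fin m)) : ‖v‖^2 = ∑ i, (v i)^2 := by
  rw [EuclideanSpace.norm_eq, Real.sq_sqrt (by positivity)]
  simp [Real.norm_eq_abs, sq_abs]
lemma abs_quadForm_le {m : ℕ} (B : Matrix (Fin m) (Fin m) ℝ) (v : EuclideanSpace ℝ (Fin m)) :
    |quadForm B v| ≤ frobNorm B * ‖v‖^2 := by
  have h1 : quadForm B v = ∑ p : Fin m × Fin m, B p.1 p.2 * (v p.1 * v p.2) := by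
    rw [quadForm, Fintype.sum_prod_type]
    exact Finset.sum_congr rfl fun i _ => Finset.sum_congr rfl fun j _ => by ring
  have h2 := Finset.sum_mul_sq_le_sq_mul_sq Finset.univ
    (fun p : Fin m × Fin m => B p.1 p.2) (fun p => v p.1 * v p.2)
  have h3 : ∑ p : Fin m × Fin m, (v p.1 * v p.2)^2 = (‖v‖^2)^2 := by
    rw [norm_sq_eq, Fintype.sum_prod_type, sq (∑ i, (v i)^2), Finset.sum_mul_sum]
    exact Finset.sum_congr rfl fun i _ => Finset.sum_congr rfl fun j _ => by ring
  have h4 : ∑ p : Fin m × Fin m, (B p.1 p.2)^2 = (frobNorm B)^2 := by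
    rw [frobNorm, Real.sq_sqrt (by positivity), Fintype.sum_prod_type]
  rw [h3, h4] at h2
  rw [h1]
  have hnn : (0:ℝ) ≤ frobNorm B * ‖v‖^2 := by
    have : (0:ℝ) ≤ frobNorm B := Real.sqrt_nonneg _
    positivity
  rw [← Real.sqrt_sq hnn, ← Real.sqrt_sq_eq_abs]
  apply Real.sqrt_le_sqrt
  calc (∑ p : Fin m × Fin m, B p.1 p.2 * (v p.1 * v p.2))^2
      ≤ frobNorm B ^ 2 * (‖v‖^2)^2 := h2
    _ = (frobNorm B * ‖v‖^2)^2 := by ring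
lemma quadForm_one {m : ℕ} (v : EuclideanSpace ℝ (Fin m)) : quadForm 1 v = ‖v‖^2 := by
  rw [quadForm, norm_sq_eq]
  apply Finset.sum_congr rfl; intro i _
  rw [Finset.sum_eq_single i]
  · simp [Matrix.one_apply]; ring
  · intro j _ hj; simp [Matrix.one_apply, Ne.symm hj]
  · simp
lemma quadForm_split {m : ℕ} (A : Matrix (Fin m) (Fin m) ℝ) (v : EuclideanSpace ℝ (Fin m)) :
    quadForm A v = quadForm (A - 1) v + ‖v‖^2 := by
  rw [← quadForm_one v, quadForm, quadForm, quadForm, ← Finset.sum_add_distrib]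
  apply Finset.sum_congr rfl; intro i _
  rw [← Finset.sum_add_distrib]
  apply Finset.sum_congr rfl; intro j _
  simp [Matrix.sub_apply]; ring
lemma quadForm_lower {m : ℕ} (A : Matrix (Fin m) (Fin m) ℝ) (v : EuclideanSpace ℝ (Fin m)) :
    (1 - frobNorm (A - 1)) * ‖v‖^2 ≤ quadForm A v := by
  have h := abs_quadForm_le (A - 1) v
  rw [quadForm_split]; nlinarith [abs_le.mp h]
lemma quadForm_upper {m : ℕ} (A : Matrix (Fin m) (Fin m) ℝ) (v : EuclideanSpace ℝ (Fin m)) :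
    quadForm A v ≤ (1 + frobNorm (A - 1)) * ‖v‖^2 := by
  have h := abs_quadForm_le (A - 1) v
  rw [quadForm_split]; nlinarith [abs_le.mp h]
lemma decomp_single {m : ℕ} (v : EuclideanSpace ℝ (Fin m)) :
    v = ∑ k, v k • EuclideanSpace.single k (1:ℝ) := by
  have := Module.Basis.sum_repr (EuclideanSpace.basisFun (Fin m) ℝ).toBasis v
  simp only [OrthonormalBasis.coe_toBasis_repr_apply, EuclideanSpace.basisFun_repr,
    OrthonormalBasis.coe_toBasis, EuclideanSpace.basisFun_apply] at this
  exact this.symm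
lemma opnorm_le {m : ℕ} {F : Type*} [NormedAddCommGroup F] [NormedSpace ℝ F]
    (L : EuclideanSpace ℝ (Fin m) →L[ℝ] F) (v : EuclideanSpace ℝ (Fin m)) :
    ‖L v‖ ≤ Real.sqrt (∑ k, ‖L (EuclideanSpace.single k (1:ℝ))‖^2) * ‖v‖ := by
  have hv := decomp_single v
  have h1 : L v = ∑ k, v k • L (EuclideanSpace.single k (1:ℝ)) := by
    conv_lhs => rw [hv]
    rw [map_sum]; simp
  rw [h1]
  calc ‖∑ k, v k • L (EuclideanSpace.single k (1:ℝ))‖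
      ≤ ∑ k, ‖v k • L (EuclideanSpace.single k (1:ℝ))‖ := norm_sum_le _ _
    _ = ∑ k, |v k| * ‖L (EuclideanSpace.single k (1:ℝ))‖ := by
        simp [norm_smul, Real.norm_eq_abs]
    _ ≤ Real.sqrt (∑ k, ‖L (EuclideanSpace.single k (1:ℝ))‖^2) * ‖v‖ := by
        have h2 := Finset.sum_mul_sq_le_sq_mul_sq Finset.univ
          (fun k : Fin m => |v k|) (fun k => ‖L (EuclideanSpace.single k (1:ℝ))‖)
        have h3 : ∑ k, |v k|^2 = ‖v‖^2 := by rw [norm_sq_eq]; simp [sq_abs]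
        rw [h3] at h2
        have hnn : (0:ℝ) ≤ Real.sqrt (∑ k, ‖L (EuclideanSpace.single k (1:ℝ))‖^2) * ‖v‖ := by
          positivity
        have hnn2 : (0:ℝ) ≤ ∑ k, |v k| * ‖L (EuclideanSpace.single k (1:ℝ))‖ := by positivity
        rw [← Real.sqrt_sq hnn2, ← Real.sqrt_sq hnn]
        apply Real.sqrt_le_sqrt
        calc (∑ k, |v k| * ‖L (EuclideanSpace.single k (1:ℝ))‖)^2
            ≤ ‖v‖^2 * ∑ k, ‖L (EuclideanSpace.single k (1:ℝ))‖^2 := h2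
          _ = (Real.sqrt (∑ k, ‖L (EuclideanSpace.single k (1:ℝ))‖^2) * ‖v‖)^2 := by
              rw [mul_pow, Real.sq_sqrt (by positivity)]; ring
noncomputable instance clmMatFrobNorm {m : ℕ} :
    Norm (EuclideanSpace ℝ (Fin m) →L[ℝ] Matrix (Fin m) (Fin m) ℝ) :=
  @ContinuousLinearMap.hasOpNorm ℝ ℝ (EuclideanSpace ℝ (Fin m)) (Matrix (Fin m) (Fin m) ℝ) _
    Matrix.frobeniusSeminormedAddCommGroup _ _ _ Matrix.frobeniusNormedSpace (RingHom.id ℝ)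
lemma fderiv_opnorm_le {m : ℕ} (g : EuclideanSpace ℝ (Fin m) → Matrix (Fin m) (Fin m) ℝ)
    (U : Set (EuclideanSpace ℝ (Fin m))) (x : EuclideanSpace ℝ (Fin m)) :
    ‖fderivWithin ℝ g U x‖ ≤ derivMetricNorm g U x := by
  set L := fderivWithin ℝ g U x
  apply ContinuousLinearMap.opNorm_le_bound _ (Real.sqrt_nonneg _)
  intro v
  have h := opnorm_le L v
  refine h.trans (mul_le_mul_of_nonneg_right ?_ (norm_nonneg v))
  apply Real.sqrt_le_sqrt
  apply le_of_eq
  apply Finset.sum_congr rfl; intro k _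
  rw [← frobNorm_eq_norm, frobNorm, Real.sq_sqrt (by positivity)]
  rfl
lemma g_lipschitz {m : ℕ} {g : EuclideanSpace ℝ (Fin m) → Matrix (Fin m) (Fin m) ℝ}
    {U : Set (EuclideanSpace ℝ (Fin m))} {μ : ℝ}
    (hg : ContDiffOn ℝ 1 g U) (hconv : Convex ℝ U)
    (hD : ∀ x ∈ U, derivMetricNorm g U x ≤ μ)
    {X Y : EuclideanSpace ℝ (Fin m)} (hX : X ∈ U) (hY : Y ∈ U) :
    frobNorm (g Y - g X) ≤ μ * ‖Y - X‖ := by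
  rw [frobNorm_eq_norm]
  exact Convex.norm_image_sub_le_of_norm_fderivWithin_le
    (hg.differentiableOn one_ne_zero)
    (fun x hx => (fderiv_opnorm_le g U x).trans (hD x hx)) hconv hX hY
lemma deriv_cont {m : ℕ} {γ : ℝ → EuclideanSpace ℝ (Fin m)}
    (hγ : ContDiffOn ℝ 1 γ (Set.Icc 0 1)) :
    ContinuousOn (derivWithin γ (Set.Icc 0 1)) (Set.Icc 0 1) :=
  hγ.continuousOn_derivWithin (uniqueDiffOn_Icc zero_lt_one) le_rfl
lemma displacement_le {m : ℕ} {γ : ℝ → EuclideanSpace ℝ (Fin m)}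
    (hγ : ContDiffOn ℝ 1 γ (Set.Icc 0 1)) {s : ℝ} (hs : s ∈ Set.Icc (0:ℝ) 1) :
    ‖γ s - γ 0‖ ≤ lengthE γ := by
  have hd := deriv_cont hγ
  have hii : IntervalIntegrable (fun t => derivWithin γ (Set.Icc 0 1) t) volume 0 1 := by
    apply ContinuousOn.intervalIntegrable
    rwa [uIcc_of_le zero_le_one]
  have hiis : IntervalIntegrable (fun t => derivWithin γ (Set.Icc 0 1) t) volume 0 s :=
    hii.mono_set (by rw [uIcc_of_le hs.1, uIcc_of_le zero_le_one]; exact Icc_subset_Icc le_rfl hs.2)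
  have hftc : ∫ t in (0:ℝ)..s, derivWithin γ (Set.Icc 0 1) t = γ s - γ 0 := by
    apply intervalIntegral.integral_eq_sub_of_hasDeriv_right_of_le hs.1
      (hγ.continuousOn.mono (Icc_subset_Icc le_rfl hs.2))
    · intro x hx
      have hx1 : x ∈ Set.Ioo (0:ℝ) 1 := ⟨hx.1, lt_of_lt_of_le hx.2 hs.2⟩
      have hdiff := (hγ.differentiableOn one_ne_zero x ⟨le_of_lt hx1.1, le_of_lt hx1.2⟩).hasDerivWithinAt
      exact (hdiff.hasDerivAt (Icc_mem_nhds hx1.1 hx1.2)).hasDerivWithinAt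
    · exact hiis
  have hnorm : ‖γ s - γ 0‖ ≤ ∫ t in (0:ℝ)..s, ‖derivWithin γ (Set.Icc 0 1) t‖ := by
    rw [← hftc]
    exact intervalIntegral.norm_integral_le_integral_norm hs.1
  have hmono : ∫ t in (0:ℝ)..s, ‖derivWithin γ (Set.Icc 0 1) t‖
      ≤ ∫ t in (0:ℝ)..1, ‖derivWithin γ (Set.Icc 0 1) t‖ := by
    apply intervalIntegral.integral_mono_interval le_rfl hs.1 hs.2
    · filter_upwards with t using norm_nonneg _
    · exact hii.norm
  have hlen : lengthE γ = ∫ t in (0:ℝ)..1, ‖derivWithin γ (Set.Icc 0 1) t‖ := by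
    rw [intervalIntegral.integral_of_le zero_le_one, lengthE, integral_Icc_eq_integral_Ioc]
  linarith
lemma entry_abs_le {m : ℕ} (M : Matrix (Fin m) (Fin m) ℝ) (i j : Fin m) : |M i j| ≤ ‖M‖ := by
  rw [← frobNorm_eq_norm, ← Real.sqrt_sq_eq_abs, frobNorm]
  apply Real.sqrt_le_sqrt
  calc (M i j)^2 ≤ ∑ j', (M i j')^2 :=
        Finset.single_le_sum (f := fun j' => (M i j')^2) (fun _ _ => sq_nonneg _) (Finset.mem_univ j)
    _ ≤ ∑ i', ∑ j', (M i' j')^2 :=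
        Finset.single_le_sum (f := fun i' => ∑ j', (M i' j')^2)
          (fun _ _ => Finset.sum_nonneg fun _ _ => sq_nonneg _) (Finset.mem_univ i)
lemma entry_continuous {m : ℕ} (i j : Fin m) :
    Continuous (fun M : Matrix (Fin m) (Fin m) ℝ => M i j) := by
  apply LipschitzWith.continuous (K := 1)
  apply LipschitzWith.of_dist_le_mul
  intro M N
  rw [Real.dist_eq, dist_eq_norm, NNReal.coe_one, one_mul]
  have := entry_abs_le (M - N) i j
  simpa [Matrix.sub_apply] using this
lemma integrand_contOn {m : ℕ} {g : EuclideanSpace ℝ (Fin m) → Matrix (Fin m) (Fin m) ℝ}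
    {U : Set (EuclideanSpace ℝ (Fin m))} {γ : ℝ → EuclideanSpace ℝ (Fin m)}
    (hgU : ContinuousOn g U) (hγ : ContDiffOn ℝ 1 γ (Set.Icc 0 1))
    (hmem : ∀ t ∈ Set.Icc (0:ℝ) 1, γ t ∈ U) :
    ContinuousOn (fun t => Real.sqrt (quadForm (g (γ t)) (derivWithin γ (Set.Icc 0 1) t)))
      (Set.Icc (0:ℝ) 1) := by
  apply Real.continuous_sqrt.comp_continuousOn
  have hgγ : ContinuousOn (fun t => g (γ t)) (Set.Icc (0:ℝ) 1) :=
    hgU.comp hγ.continuousOn hmem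
  have hd := deriv_cont hγ
  unfold quadForm
  apply continuousOn_finset_sum; intro i _
  apply continuousOn_finset_sum; intro j _
  exact (((entry_continuous i j).comp_continuousOn hgγ).mul
    ((PiLp.continuous_apply 2 (fun _ => ℝ) i).comp_continuousOn hd)).mul
    ((PiLp.continuous_apply 2 (fun _ => ℝ) j).comp_continuousOn hd)
lemma lengthG_nonneg {m : ℕ} (g : EuclideanSpace ℝ (Fin m) → Matrix (Fin m) (Fin m) ℝ)
    (γ : ℝ → EuclideanSpace ℝ (Fin m)) : 0 ≤ lengthG g γ :=
  integral_nonneg fun _ => Real.sqrt_nonneg _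
lemma lengthG_lower {m : ℕ} {g : EuclideanSpace ℝ (Fin m) → Matrix (Fin m) (Fin m) ℝ}
    {U : Set (EuclideanSpace ℝ (Fin m))} {γ : ℝ → EuclideanSpace ℝ (Fin m)} {b : ℝ}
    (hgU : ContinuousOn g U) (hγ : ContDiffOn ℝ 1 γ (Set.Icc 0 1))
    (hmem : ∀ t ∈ Set.Icc (0:ℝ) 1, γ t ∈ U)
    (hb : ∀ t ∈ Set.Icc (0:ℝ) 1, frobNorm (g (γ t) - 1) ≤ b) (hb1 : b ≤ 1) :
    Real.sqrt (1 - b) * lengthE γ ≤ lengthG g γ := by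
  have key : ∫ t in Set.Icc (0:ℝ) 1, Real.sqrt (1 - b) * ‖derivWithin γ (Set.Icc 0 1) t‖
      ≤ lengthG g γ := by
    apply setIntegral_mono_on
    · exact (((deriv_cont hγ).norm).const_smul (Real.sqrt (1-b))).integrableOn_Icc
    · exact (integrand_contOn hgU hγ hmem).integrableOn_Icc
    · exact measurableSet_Icc
    · intro t ht
      have h1 : (1 - b) * ‖derivWithin γ (Set.Icc 0 1) t‖^2
          ≤ quadForm (g (γ t)) (derivWithin γ (Set.Icc 0 1) t) := by
        refine le_trans ?_ (quadForm_lower _ _)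
        apply mul_le_mul_of_nonneg_right _ (sq_nonneg _)
        linarith [hb t ht]
      calc Real.sqrt (1 - b) * ‖derivWithin γ (Set.Icc 0 1) t‖
          = Real.sqrt ((1 - b) * ‖derivWithin γ (Set.Icc 0 1) t‖^2) := by
            rw [Real.sqrt_mul (by linarith), Real.sqrt_sq (norm_nonneg _)]
        _ ≤ _ := Real.sqrt_le_sqrt h1
  calc Real.sqrt (1 - b) * lengthE γ
      = ∫ t in Set.Icc (0:ℝ) 1, Real.sqrt (1 - b) * ‖derivWithin γ (Set.Icc 0 1) t‖ := by
        rw [lengthE, MeasureTheory.integral_const_mul]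
    _ ≤ lengthG g γ := key
lemma lengthG_le_const {m : ℕ} {g : EuclideanSpace ℝ (Fin m) → Matrix (Fin m) (Fin m) ℝ}
    {U : Set (EuclideanSpace ℝ (Fin m))} {γ : ℝ → EuclideanSpace ℝ (Fin m)} {C : ℝ}
    (hgU : ContinuousOn g U) (hγ : ContDiffOn ℝ 1 γ (Set.Icc 0 1))
    (hmem : ∀ t ∈ Set.Icc (0:ℝ) 1, γ t ∈ U)
    (hC : ∀ t ∈ Set.Icc (0:ℝ) 1,
      Real.sqrt (quadForm (g (γ t)) (derivWithin γ (Set.Icc 0 1) t)) ≤ C) :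
    lengthG g γ ≤ C := by
  have h1 : lengthG g γ ≤ ‖lengthG g γ‖ := le_abs_self _
  have h2 : ‖lengthG g γ‖ ≤ C * (volume (Set.Icc (0:ℝ) 1)).toReal := by
    apply norm_setIntegral_le_of_norm_le_const
    · rw [Real.volume_Icc]; exact ENNReal.ofReal_lt_top
    · intro t ht
      rw [Real.norm_eq_abs, abs_of_nonneg (Real.sqrt_nonneg _)]
      exact hC t ht
  have h3 : (volume (Set.Icc (0:ℝ) 1)).toReal = 1 := by
    rw [Real.volume_Icc]; norm_num
  rw [h3, mul_one] at h2
  linarith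
def segCurve {m : ℕ} (X Y : EuclideanSpace ℝ (Fin m)) : ℝ → EuclideanSpace ℝ (Fin m) :=
  fun t => X + t • (Y - X)
lemma segCurve_contDiff {m : ℕ} (X Y : EuclideanSpace ℝ (Fin m)) :
    ContDiffOn ℝ 1 (segCurve X Y) (Set.Icc 0 1) :=
  (contDiff_const.add (contDiff_id.smul contDiff_const)).contDiffOn
lemma segCurve_deriv {m : ℕ} (X Y : EuclideanSpace ℝ (Fin m)) {t : ℝ} (ht : t ∈ Set.Icc (0:ℝ) 1) :
    derivWithin (segCurve X Y) (Set.Icc 0 1) t = Y - X := by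
  have h : HasDerivAt (segCurve X Y) (Y - X) t := by
    have h0 := ((hasDerivAt_id t).smul_const (Y - X)).const_add X
    simp only [id_eq, one_smul] at h0
    exact h0
  exact h.hasDerivWithinAt.derivWithin (uniqueDiffOn_Icc zero_lt_one t ht)
lemma segCurve_zero {m : ℕ} (X Y : EuclideanSpace ℝ (Fin m)) : segCurve X Y 0 = X := by
  simp [segCurve]
lemma segCurve_one {m : ℕ} (X Y : EuclideanSpace ℝ (Fin m)) : segCurve X Y 1 = Y := by
  simp [segCurve]
lemma geodSet_bddBelow {m : ℕ} (g : EuclideanSpace ℝ (Fin m) → Matrix (Fin m) (Fin m) ℝ)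
    (U : Set (EuclideanSpace ℝ (Fin m))) (X Y : EuclideanSpace ℝ (Fin m)) :
    BddBelow {L : ℝ | ∃ γ : ℝ → EuclideanSpace ℝ (Fin m),
      ContDiffOn ℝ 1 γ (Set.Icc 0 1) ∧ (∀ t ∈ Set.Icc (0:ℝ) 1, γ t ∈ U) ∧
      γ 0 = X ∧ γ 1 = Y ∧ L = lengthG g γ} := by
  refine ⟨0, fun L hL => ?_⟩
  obtain ⟨γ, -, -, -, -, rfl⟩ := hL
  exact lengthG_nonneg g γ
lemma segCurve_mem_geodSet {m : ℕ} (g : EuclideanSpace ℝ (Fin m) → Matrix (Fin m) (Fin m) ℝ)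
    {U : Set (EuclideanSpace ℝ (Fin m))} (hconv : Convex ℝ U)
    {X Y : EuclideanSpace ℝ (Fin m)} (hX : X ∈ U) (hY : Y ∈ U) :
    lengthG g (segCurve X Y) ∈ {L : ℝ | ∃ γ : ℝ → EuclideanSpace ℝ (Fin m),
      ContDiffOn ℝ 1 γ (Set.Icc 0 1) ∧ (∀ t ∈ Set.Icc (0:ℝ) 1, γ t ∈ U) ∧
      γ 0 = X ∧ γ 1 = Y ∧ L = lengthG g γ} :=
  ⟨segCurve X Y, segCurve_contDiff X Y,
    fun t ht => hconv.add_smul_sub_mem hX hY ht,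
    segCurve_zero X Y, segCurve_one X Y, rfl⟩

set_option maxHeartbeats 1000000 in
/-- For an open bounded convex `U ⊆ ℝ^{n+1}` there exist `μ₀ ∈ (0,1)` and `C > 0`
such that for every `μ`-flat `C¹` metric `g` on `U` with `μ ∈ (0,μ₀)`, every `X ∈ U`
at which `g(X) = δ` (the identity matrix), and every `ρ > 0`:
`B_{(1−Cμρ)ρ}(X) ∩ U ⊆ B^g_ρ(X) ⊆ B_{(1+Cμρ)ρ}(X)`. -/
theorem geodesic_ball_comparison_fine (n : ℕ) (hn : 1 ≤ n)
    (U : Set (EuclideanSpace ℝ (Fin (n+1)))) (hUopen : IsOpen U)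
    (hUbdd : Bornology.IsBounded U) (hUconv : Convex ℝ U) :
    ∃ μ₀ C : ℝ, μ₀ ∈ Set.Ioo (0:ℝ) 1 ∧ 0 < C ∧
      ∀ g : EuclideanSpace ℝ (Fin (n+1)) → Matrix (Fin (n+1)) (Fin (n+1)) ℝ,
        IsC1Metric g U →
      ∀ μ : ℝ, μ ∈ Set.Ioo (0:ℝ) μ₀ → MuFlat g U μ →
      ∀ X ∈ U, g X = 1 →
      ∀ ρ : ℝ, 0 < ρ →
        Metric.ball X ((1 - C * μ * ρ) * ρ) ∩ U ⊆ geodBall g U X ρ ∧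
        geodBall g U X ρ ⊆ Metric.ball X ((1 + C * μ * ρ) * ρ) := by
  obtain ⟨D₀, hD₀⟩ := Metric.isBounded_iff.mp hUbdd
  set D : ℝ := max D₀ 1 with hDdef
  have hD1 : (1:ℝ) ≤ D := le_max_right _ _
  have hDpos : (0:ℝ) < D := lt_of_lt_of_le one_pos hD1
  have hDdist : ∀ x ∈ U, ∀ y ∈ U, dist x y ≤ D :=
    fun x hx y hy => (hD₀ hx hy).trans (le_max_left _ _)
  refine ⟨min (1/2) (1/(8*D)), 8,
    ⟨lt_min (by norm_num) (by positivity), lt_of_le_of_lt (min_le_left _ _) (by norm_num)⟩,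
    by norm_num, ?_⟩
  intro g hg μ hμ hflat X hXU hgX ρ hρ
  have hμpos := hμ.1
  have hμhalf : μ ≤ 1/2 := le_of_lt (lt_of_lt_of_le hμ.2 (min_le_left _ _))
  have hμD : μ ≤ 1/(8*D) := le_of_lt (lt_of_lt_of_le hμ.2 (min_le_right _ _))
  have hμD' : μ * D ≤ 1/8 := by
    rw [le_div_iff₀ (by positivity)] at hμD
    nlinarith
  have hgU := hg.1.continuousOn
  have hDflat : ∀ x ∈ U, derivMetricNorm g U x ≤ μ := fun x hx => (hflat x hx).2
  have hlip : ∀ Z ∈ U, frobNorm (g Z - 1) ≤ μ * ‖Z - X‖ := by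
    intro Z hZ
    rw [← hgX]
    exact g_lipschitz hg.1 hUconv hDflat hXU hZ
  constructor
  · -- first inclusion
    rintro Y ⟨hYball, hYU⟩
    rw [Metric.mem_ball, dist_eq_norm] at hYball
    have hYXnn : (0:ℝ) ≤ ‖Y - X‖ := norm_nonneg _
    have hrpos : 0 < 1 - 8*μ*ρ := by
      by_contra h
      push_neg at h
      have : (1 - 8*μ*ρ)*ρ ≤ 0 := mul_nonpos_of_nonpos_of_nonneg (by linarith) hρ.le
      linarith
    have hYXρ : ‖Y - X‖ ≤ ρ := by nlinarith [mul_pos (mul_pos hμpos hρ) hρ]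
    have hmem : ∀ t ∈ Set.Icc (0:ℝ) 1, segCurve X Y t ∈ U :=
      fun t ht => hUconv.add_smul_sub_mem hXU hYU ht
    have hlen : lengthG g (segCurve X Y) ≤ Real.sqrt (1 + μ*ρ) * ‖Y - X‖ := by
      apply lengthG_le_const hgU (segCurve_contDiff X Y) hmem
      intro t ht
      rw [segCurve_deriv X Y ht]
      have h1 := hlip (segCurve X Y t) (hmem t ht)
      have h2 : ‖segCurve X Y t - X‖ = t * ‖Y - X‖ := by
        simp [segCurve, add_sub_cancel_left, norm_smul, abs_of_nonneg ht.1]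
      have hfr : frobNorm (g (segCurve X Y t) - 1) ≤ μ * ρ := by
        rw [h2] at h1
        have ha : μ * (t * ‖Y - X‖) ≤ μ * ‖Y - X‖ := by
          nlinarith [mul_nonneg (mul_nonneg hμpos.le (sub_nonneg.mpr ht.2)) hYXnn]
        have hb : μ * ‖Y - X‖ ≤ μ * ρ := mul_le_mul_of_nonneg_left hYXρ hμpos.le
        linarith
      have hquad := quadForm_upper (g (segCurve X Y t)) (Y - X)
      have h3 : quadForm (g (segCurve X Y t)) (Y - X) ≤ (1 + μ*ρ) * ‖Y - X‖^2 := by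
        nlinarith [sq_nonneg ‖Y - X‖]
      calc Real.sqrt (quadForm (g (segCurve X Y t)) (Y - X))
          ≤ Real.sqrt ((1 + μ*ρ) * ‖Y - X‖^2) := Real.sqrt_le_sqrt h3
        _ = Real.sqrt (1 + μ*ρ) * ‖Y - X‖ := by
            rw [Real.sqrt_mul (by positivity), Real.sqrt_sq hYXnn]
    have hgeod : geodDist g U X Y ≤ lengthG g (segCurve X Y) :=
      csInf_le (geodSet_bddBelow g U X Y) (segCurve_mem_geodSet g hUconv hXU hYU)
    refine ⟨hYU, lt_of_le_of_lt (hgeod.trans hlen) ?_⟩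
    have hs := Real.sq_sqrt (show (0:ℝ) ≤ 1 + μ*ρ by positivity)
    have hs0 := Real.sqrt_nonneg (1 + μ*ρ)
    have hspos : 0 < Real.sqrt (1 + μ*ρ) := by nlinarith [mul_pos hμpos hρ]
    calc Real.sqrt (1 + μ*ρ) * ‖Y - X‖
        < Real.sqrt (1 + μ*ρ) * ((1 - 8*μ*ρ)*ρ) := by
          exact mul_lt_mul_of_pos_left hYball hspos
      _ ≤ ρ := by
          have h6 : Real.sqrt (1 + μ*ρ) * (1 - 8*μ*ρ) ≤ 1 := by
            nlinarith [sq_nonneg (Real.sqrt (1 + μ*ρ) - 1), mul_pos hμpos hρ,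
              sq_nonneg (μ*ρ)]
          calc Real.sqrt (1 + μ*ρ) * ((1 - 8*μ*ρ)*ρ)
              = (Real.sqrt (1 + μ*ρ) * (1 - 8*μ*ρ)) * ρ := by ring
            _ ≤ 1 * ρ := mul_le_mul_of_nonneg_right h6 hρ.le
            _ = ρ := one_mul ρ
  · -- second inclusion
    rintro Y ⟨hYU, hYdist⟩
    rw [Metric.mem_ball, dist_eq_norm]
    have hbd := geodSet_bddBelow g U X Y
    have hne : Set.Nonempty {L : ℝ | ∃ γ : ℝ → EuclideanSpace ℝ (Fin (n+1)),
        ContDiffOn ℝ 1 γ (Set.Icc 0 1) ∧ (∀ t ∈ Set.Icc (0:ℝ) 1, γ t ∈ U) ∧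
        γ 0 = X ∧ γ 1 = Y ∧ L = lengthG g γ} :=
      ⟨_, segCurve_mem_geodSet g hUconv hXU hYU⟩
    obtain ⟨L, hLmem, hLρ⟩ := (csInf_lt_iff hbd hne).mp hYdist
    obtain ⟨γ, hγC1, hγmem, hγ0, hγ1, rfl⟩ := hLmem
    rcases le_or_gt ρ D with hρD | hρD
    · -- ρ ≤ D
      have hμρ : μ * ρ ≤ 1/8 := by
        nlinarith [mul_nonneg hμpos.le (sub_nonneg.mpr hρD)]
      have hcoarse : Real.sqrt (1 - μ) * lengthE γ ≤ lengthG g γ :=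
        lengthG_lower hgU hγC1 hγmem (fun t ht => (hflat (γ t) (hγmem t ht)).1) (by linarith)
      have hE0 : 0 ≤ lengthE γ := integral_nonneg fun _ => norm_nonneg _
      have hsq : (1:ℝ)/2 ≤ Real.sqrt (1 - μ) := by
        have h := Real.sq_sqrt (show (0:ℝ) ≤ 1 - μ by linarith)
        nlinarith [Real.sqrt_nonneg (1 - μ)]
      have hE2ρ : lengthE γ ≤ 2*ρ := by
        have := mul_le_mul_of_nonneg_right hsq hE0
        linarith
      have hfine : Real.sqrt (1 - 2*μ*ρ) * lengthE γ ≤ lengthG g γ := by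
        apply lengthG_lower hgU hγC1 hγmem _ (by nlinarith [mul_pos hμpos hρ])
        intro t ht
        have h1 := hlip (γ t) (hγmem t ht)
        have h2 : ‖γ t - X‖ ≤ lengthE γ := by
          rw [← hγ0]; exact displacement_le hγC1 ht
        have ha := mul_le_mul_of_nonneg_left h2 hμpos.le
        have hb := mul_le_mul_of_nonneg_left hE2ρ hμpos.le
        linarith
      have hYX : ‖Y - X‖ ≤ lengthE γ := by
        rw [← hγ0, ← hγ1]
        exact displacement_le hγC1 (by norm_num)
      have hx : 0 < 2*μ*ρ := by positivity
      have hx4 : 2*μ*ρ ≤ 1/4 := by nlinarith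
      have hs := Real.sq_sqrt (show (0:ℝ) ≤ 1 - 2*μ*ρ by linarith)
      have hs0 := Real.sqrt_nonneg (1 - 2*μ*ρ)
      have hs1 : Real.sqrt (1 - 2*μ*ρ) ≤ 1 := Real.sqrt_le_one.mpr (by linarith)
      have hkey : Real.sqrt (1 - 2*μ*ρ) * ‖Y - X‖ < ρ := by
        have := mul_le_mul_of_nonneg_left hYX hs0
        linarith
      have hsl : 1 - 2*μ*ρ ≤ Real.sqrt (1 - 2*μ*ρ) := by
        nlinarith [mul_nonneg hs0 (sub_nonneg.mpr hs1)]
      have h5 : 1 ≤ Real.sqrt (1 - 2*μ*ρ) * (1 + 8*μ*ρ) := by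
        have hc := mul_le_mul_of_nonneg_right hsl
          (show (0:ℝ) ≤ 1 + 8*μ*ρ by nlinarith)
        nlinarith [sq_nonneg (μ*ρ)]
      have hfinal : ρ ≤ Real.sqrt (1 - 2*μ*ρ) * ((1 + 8*μ*ρ)*ρ) := by
        calc ρ = 1 * ρ := (one_mul ρ).symm
          _ ≤ (Real.sqrt (1 - 2*μ*ρ) * (1 + 8*μ*ρ)) * ρ :=
              mul_le_mul_of_nonneg_right h5 hρ.le
          _ = Real.sqrt (1 - 2*μ*ρ) * ((1 + 8*μ*ρ)*ρ) := by ring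
      exact lt_of_mul_lt_mul_left (hkey.trans_le hfinal) hs0
    · -- ρ > D
      have hdYX : ‖Y - X‖ ≤ D := by
        rw [← dist_eq_norm]; exact hDdist Y hYU X hXU
      nlinarith [mul_pos hμpos (mul_pos hρ hρ)]

end
end

section
/- For all real numbers C ≥ 0 and μ ≥ 0 there exist ρ* > 0 and C' ≥ 0, depending only on C and μ, with the following property: for every ρ₁ ∈ (0, ρ*] and every Borel measurable function f : (0, ρ₁] → [0, ∞) that is bounded on [a, ρ₁] for each a ∈ (0, ρ₁), if f(σ) ≤ (1 + Cρ)·f(ρ) + Cμ·∫_σ^ρ f(τ) dτ whenever ρ/2 ≤ σ < ρ ≤ ρ₁, then f(σ) ≤ (1 + C'ρ)·f(ρ) for all 0 < σ < ρ ≤ ρ₁. -/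
open MeasureTheory

set_option maxHeartbeats 2000000

/-- Gronwall-type dyadic iteration: if a nonnegative locally bounded Borel function
`f` on `(0, ρ₁]` satisfies `f(σ) ≤ (1 + Cρ) f(ρ) + Cμ ∫_σ^ρ f` whenever
`ρ/2 ≤ σ < ρ ≤ ρ₁`, with `ρ₁` small enough (depending only on `C`, `μ`), then
`f(σ) ≤ (1 + C'ρ) f(ρ)` for all `0 < σ < ρ ≤ ρ₁`, with `C'` depending only on
`C` and `μ`. -/
theorem dyadic_gronwall_iteration (C μ : ℝ) (hC : 0 ≤ C) (hμ : 0 ≤ μ) :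
    ∃ ρStar C' : ℝ, 0 < ρStar ∧ 0 ≤ C' ∧
      ∀ ρ₁ : ℝ, 0 < ρ₁ → ρ₁ ≤ ρStar →
      ∀ f : ℝ → ℝ, Measurable f →
        (∀ x ∈ Set.Ioc (0:ℝ) ρ₁, 0 ≤ f x) →
        (∀ a ∈ Set.Ioo (0:ℝ) ρ₁, BddAbove (f '' Set.Icc a ρ₁)) →
        (∀ σ ρ : ℝ, ρ / 2 ≤ σ → σ < ρ → ρ ≤ ρ₁ →
          f σ ≤ (1 + C * ρ) * f ρ + C * μ * ∫ τ in σ..ρ, f τ) →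
        ∀ σ ρ : ℝ, 0 < σ → σ < ρ → ρ ≤ ρ₁ → f σ ≤ (1 + C' * ρ) * f ρ := by
  obtain ⟨C₁, hC₁def⟩ : ∃ x : ℝ, x = C + 2 * C * μ := ⟨_, rfl⟩
  have hC₁0 : 0 ≤ C₁ := by rw [hC₁def]; positivity
  refine ⟨(2 * (1 + C₁))⁻¹, 4 * C₁, inv_pos.mpr (by linarith), by linarith, ?_⟩
  intro ρ₁ hρ₁pos hρ₁le f hfm hf0 hbdd hrec
  -- One-step bound
  have key : ∀ σ ρ : ℝ, ρ / 2 ≤ σ → σ < ρ → ρ ≤ ρ₁ →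
      f σ ≤ (1 + C₁ * ρ) * f ρ := by
    intro σ ρ hhalf hσρ hρ
    have hρpos : 0 < ρ := by linarith
    have hσpos : 0 < σ := by linarith
    have hρstar : ρ ≤ (2 * (1 + C₁))⁻¹ := hρ.trans hρ₁le
    have hpos : (0:ℝ) < 2 * (1 + C₁) := by linarith
    have hρsmall : 2 * (1 + C₁) * ρ ≤ 1 := by
      rw [inv_eq_one_div, le_div_iff₀ hpos] at hρstar
      linarith
    have h1 : C₁ * ρ ≤ 1 / 2 := by nlinarith
    have hCC₁ : C ≤ C₁ := by rw [hC₁def]; nlinarith [mul_nonneg hC hμ]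
    have h2Cμ : 2 * (C * μ) ≤ C₁ := by rw [hC₁def]; linarith
    have h2 : C * ρ ≤ 1 := by
      nlinarith [mul_le_mul_of_nonneg_right hCC₁ hρpos.le]
    have h3 : C * μ * ρ ≤ 1 / 4 := by
      nlinarith [mul_le_mul_of_nonneg_right h2Cμ hρpos.le]
    set M : ℝ := sSup (f '' Set.Icc (ρ / 2) ρ) with hMdef
    have hmem : ρ / 2 ∈ Set.Ioo (0:ℝ) ρ₁ := ⟨by linarith, by linarith⟩
    have hbddM : BddAbove (f '' Set.Icc (ρ / 2) ρ) :=
      (hbdd (ρ / 2) hmem).mono (Set.image_mono (Set.Icc_subset_Icc_right hρ))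
    have hfρM : f ρ ≤ M :=
      le_csSup hbddM ⟨ρ, ⟨by linarith, le_refl ρ⟩, rfl⟩
    have hfρ0 : 0 ≤ f ρ := hf0 ρ ⟨hρpos, hρ⟩
    have hM0 : 0 ≤ M := hfρ0.trans hfρM
    -- Integral bound
    have hIb : ∀ σ' : ℝ, ρ / 2 ≤ σ' → σ' < ρ →
        (∫ τ in σ'..ρ, f τ) ≤ ρ / 2 * M := by
      intro σ' hσ'l hσ'r
      have hint : IntervalIntegrable f volume σ' ρ := by
        rw [intervalIntegrable_iff_integrableOn_Ioc_of_le hσ'r.le]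
        apply Measure.integrableOn_of_bounded (M := M)
          (by simp [Real.volume_Ioc]) hfm.aestronglyMeasurable
        filter_upwards [ae_restrict_mem measurableSet_Ioc] with x hx
        have hx0 : 0 ≤ f x := hf0 x ⟨by linarith [hx.1], hx.2.trans hρ⟩
        rw [Real.norm_eq_abs, abs_of_nonneg hx0]
        exact le_csSup hbddM ⟨x, ⟨by linarith [hx.1], hx.2⟩, rfl⟩
      have hintc : IntervalIntegrable (fun _ : ℝ => M) volume σ' ρ :=
        intervalIntegrable_const
      have hmono : (∫ τ in σ'..ρ, f τ) ≤ ∫ _ in σ'..ρ, M := by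
        apply intervalIntegral.integral_mono_on hσ'r.le hint hintc
        intro x hx
        exact le_csSup hbddM ⟨x, ⟨by linarith [hx.1], hx.2⟩, rfl⟩
      rw [intervalIntegral.integral_const, smul_eq_mul] at hmono
      have : (ρ - σ') * M ≤ ρ / 2 * M := by nlinarith
      linarith
    -- Bound M
    have hMb : M ≤ 2 * (1 + C * ρ) * f ρ := by
      have hMle : M ≤ (1 + C * ρ) * f ρ + C * μ * (ρ / 2 * M) := by
        have hne : (f '' Set.Icc (ρ / 2) ρ).Nonempty :=
          ⟨f ρ, ⟨ρ, ⟨by linarith, le_refl ρ⟩, rfl⟩⟩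
        apply csSup_le hne
        rintro y ⟨τ, hτ, rfl⟩
        rcases eq_or_lt_of_le hτ.2 with h | h
        · rw [h]
          nlinarith [mul_nonneg (mul_nonneg (mul_nonneg hC hμ) (by linarith : (0:ℝ) ≤ ρ / 2)) hM0,
            mul_nonneg (mul_nonneg hC hρpos.le) hfρ0]
        · have := hrec τ ρ hτ.1 h hρ
          have hib := hIb τ hτ.1 h
          nlinarith [mul_nonneg (mul_nonneg hC hμ) (sub_nonneg.2 (hib))]
      nlinarith [mul_le_mul_of_nonneg_right h3 hM0]
    have hr := hrec σ ρ hhalf hσρ hρ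
    have hib := hIb σ hhalf hσρ
    have hCμ0 : 0 ≤ C * μ := mul_nonneg hC hμ
    have hthis : f σ ≤ (1 + C * ρ) * f ρ + C * μ * (ρ / 2 * M) := by
      nlinarith [mul_le_mul_of_nonneg_left hib hCμ0]
    have hCμρ2 : (0:ℝ) ≤ C * μ * (ρ / 2) :=
      mul_nonneg hCμ0 (by linarith)
    have hstep : C * μ * (ρ / 2) * M ≤ C * μ * (ρ / 2) * (2 * (1 + C * ρ) * f ρ) :=
      mul_le_mul_of_nonneg_left hMb hCμρ2
    have hstep2 : C * μ * ρ * f ρ * (C * ρ) ≤ C * μ * ρ * f ρ * 1 :=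
      mul_le_mul_of_nonneg_left h2
        (mul_nonneg (mul_nonneg hCμ0 hρpos.le) hfρ0)
    rw [hC₁def]
    nlinarith [hstep, hstep2]
  -- Dyadic induction
  have main : ∀ k : ℕ, ∀ σ ρ : ℝ, 0 < σ → σ < ρ → ρ ≤ ρ₁ → ρ / 2 ^ k ≤ σ →
      f σ ≤ (1 + 4 * C₁ * (1 - (1 / 2 : ℝ) ^ k) * ρ) * f ρ := by
    intro k
    induction k with
    | zero =>
      intro σ ρ h1 h2 h3 h4
      simp only [pow_zero, div_one] at h4
      linarith
    | succ k ih =>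
      intro σ ρ hσ hσρ hρ h4
      have hρpos : 0 < ρ := hσ.trans hσρ
      have hfρ0 : 0 ≤ f ρ := hf0 ρ ⟨hρpos, hρ⟩
      have hρstar : ρ ≤ (2 * (1 + C₁))⁻¹ := hρ.trans hρ₁le
      have hpos : (0:ℝ) < 2 * (1 + C₁) := by linarith
      have hρsmall : 2 * (1 + C₁) * ρ ≤ 1 := by
        rw [inv_eq_one_div, le_div_iff₀ hpos] at hρstar
        linarith
      have h1 : C₁ * ρ ≤ 1 / 2 := by nlinarith
      have hp : ((1:ℝ) / 2) ^ (k + 1) ≤ 1 / 2 := by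
        calc ((1:ℝ) / 2) ^ (k + 1) ≤ ((1:ℝ) / 2) ^ 1 :=
              pow_le_pow_of_le_one (by norm_num) (by norm_num) (by omega)
          _ = 1 / 2 := pow_one _
      have hp0 : (0:ℝ) ≤ ((1:ℝ) / 2) ^ (k + 1) := by positivity
      by_cases hhalf : ρ / 2 ≤ σ
      · have hk := key σ ρ hhalf hσρ hρ
        have hq : 0 ≤ C₁ * ρ := mul_nonneg hC₁0 hρpos.le
        nlinarith [mul_nonneg hq hfρ0,
          mul_le_mul_of_nonneg_right hp (mul_nonneg hq hfρ0)]
      · push_neg at hhalf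
        have hhalfpos : 0 < ρ / 2 := by linarith
        have hk2 : ρ / 2 / 2 ^ k ≤ σ := by
          rw [div_div]
          calc ρ / (2 * 2 ^ k) = ρ / 2 ^ (k + 1) := by rw [pow_succ]; ring_nf
            _ ≤ σ := h4
        have hIH := ih σ (ρ / 2) hσ hhalf (by linarith) hk2
        have hkey := key (ρ / 2) ρ le_rfl (by linarith) hρ
        have hfρ2 : 0 ≤ f (ρ / 2) := hf0 _ ⟨hhalfpos, by linarith⟩
        have hpk : ((1:ℝ) / 2) ^ k ≤ 1 := by
          apply pow_le_one₀ <;> norm_num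
        have hpk0 : (0:ℝ) ≤ ((1:ℝ) / 2) ^ k := by positivity
        have hA0 : (0:ℝ) ≤ 1 + 4 * C₁ * (1 - (1 / 2 : ℝ) ^ k) * (ρ / 2) := by
          nlinarith [mul_nonneg hC₁0 hρpos.le,
            mul_le_mul_of_nonneg_left hpk (mul_nonneg hC₁0 hρpos.le)]
        have hchain : f σ ≤ (1 + 4 * C₁ * (1 - (1 / 2 : ℝ) ^ k) * (ρ / 2)) *
            ((1 + C₁ * ρ) * f ρ) :=
          hIH.trans (mul_le_mul_of_nonneg_left hkey hA0)
        have hps : ((1:ℝ) / 2) ^ (k + 1) = (1 / 2 : ℝ) ^ k * (1 / 2) := pow_succ _ _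
        have hq : 0 ≤ C₁ * ρ := mul_nonneg hC₁0 hρpos.le
        -- (1 + 2 C₁ s ρ)(1 + C₁ ρ) ≤ 1 + 4 C₁ (1 - p/2) ρ with s = 1 - p, C₁ρ ≤ 1/2
        have hcoef : (1 + 4 * C₁ * (1 - (1 / 2 : ℝ) ^ k) * (ρ / 2)) * (1 + C₁ * ρ) ≤
            1 + 4 * C₁ * (1 - (1 / 2 : ℝ) ^ (k + 1)) * ρ := by
          rw [hps]
          nlinarith [mul_le_mul_of_nonneg_left h1 hq, mul_nonneg hpk0 (mul_nonneg hq hq),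
            mul_nonneg hq hpk0]
        calc f σ ≤ (1 + 4 * C₁ * (1 - (1 / 2 : ℝ) ^ k) * (ρ / 2)) *
            ((1 + C₁ * ρ) * f ρ) := hchain
          _ = ((1 + 4 * C₁ * (1 - (1 / 2 : ℝ) ^ k) * (ρ / 2)) * (1 + C₁ * ρ)) * f ρ := by ring
          _ ≤ (1 + 4 * C₁ * (1 - (1 / 2 : ℝ) ^ (k + 1)) * ρ) * f ρ :=
              mul_le_mul_of_nonneg_right hcoef hfρ0
  intro σ ρ hσ hσρ hρ
  have hρpos : 0 < ρ := hσ.trans hσρ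
  obtain ⟨k, hk⟩ : ∃ k : ℕ, ρ / σ < 2 ^ k := pow_unbounded_of_one_lt (ρ / σ) one_lt_two
  have hk' : ρ / 2 ^ k ≤ σ := by
    rw [div_lt_iff₀ hσ] at hk
    rw [div_le_iff₀ (by positivity : (0:ℝ) < (2:ℝ) ^ k)]
    linarith
  have hfρ0 : 0 ≤ f ρ := hf0 ρ ⟨hρpos, hρ⟩
  have hm := main k σ ρ hσ hσρ hρ hk'
  have hpk0 : (0:ℝ) ≤ ((1:ℝ) / 2) ^ k := by positivity
  nlinarith [mul_nonneg (mul_nonneg (mul_nonneg hC₁0 hpk0) hρpos.le) hfρ0]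
end

section
/- Let C ≥ 0, ρ₀ > 0, and let h : (0, ρ₀) → [0, ∞) be a function satisfying h(σ) ≤ (1 + Cρ)·h(ρ) + Cρ whenever 0 < 2σ ≤ ρ < ρ₀. Then the limit lim_{ρ → 0⁺} h(ρ) exists and is a finite nonnegative real number. -/
open Filter

/-- If a nonnegative function `h` on `(0, ρ₀)` satisfies the almost-monotonicity
inequality `h(σ) ≤ (1 + Cρ) h(ρ) + Cρ` whenever `0 < 2σ ≤ ρ < ρ₀`, then the
limit `lim_{ρ → 0⁺} h(ρ)` exists and is a finite nonnegative real number. -/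
theorem limit_exists_of_almost_monotone (C ρ₀ : ℝ) (hC : 0 ≤ C) (hρ₀ : 0 < ρ₀)
    (h : ℝ → ℝ)
    (hnn : ∀ ρ ∈ Set.Ioo (0:ℝ) ρ₀, 0 ≤ h ρ)
    (hmono : ∀ σ ρ : ℝ, 0 < σ → 2 * σ ≤ ρ → ρ < ρ₀ →
      h σ ≤ (1 + C * ρ) * h ρ + C * ρ) :
    ∃ L : ℝ, 0 ≤ L ∧ Tendsto h (nhdsWithin 0 (Set.Ioi 0)) (nhds L) := by
  set l := nhdsWithin (0:ℝ) (Set.Ioi 0) with hl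
  have hmem : ∀ c : ℝ, 0 < c → ∀ᶠ x in l, x ∈ Set.Ioo (0:ℝ) c := by
    intro c hc
    exact Ioo_mem_nhdsGT_of_mem ⟨le_refl 0, hc⟩
  have hnn' : ∀ᶠ x in l, 0 ≤ h x := (hmem ρ₀ hρ₀).mono fun x hx => hnn x hx
  have hbdd : Filter.IsBoundedUnder (· ≤ ·) l h := by
    refine ⟨(1 + C * (ρ₀/2)) * h (ρ₀/2) + C * (ρ₀/2), eventually_map.2 ?_⟩
    filter_upwards [hmem (ρ₀/4) (by linarith)] with x hx
    exact hmono x (ρ₀/2) hx.1 (by linarith [hx.2]) (by linarith)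
  have hbdd' : Filter.IsBoundedUnder (· ≥ ·) l h := ⟨0, hnn'.mono fun x hx => hx⟩
  have hcob : Filter.IsCoboundedUnder (· ≥ ·) l h := hbdd.isCoboundedUnder_ge
  set L := Filter.liminf h l with hLdef
  have hL0 : 0 ≤ L := Filter.le_liminf_of_le hcob hnn'
  refine ⟨L, hL0, ?_⟩
  rw [Metric.tendsto_nhds]
  intro ε hε
  have hlow : ∀ᶠ x in l, L - ε < h x :=
    Filter.eventually_lt_of_lt_liminf (by linarith) hbdd'
  set δ := min 1 (ε / (2 * (1 + C * (L + 2)))) with hδdef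
  have hden : 0 < 1 + C * (L + 2) := by nlinarith
  have hδpos : 0 < δ := lt_min one_pos (by positivity)
  have hδ1 : δ ≤ 1 := min_le_left _ _
  have hδ2 : δ * (1 + C * (L + 2)) ≤ ε / 2 := by
    have h3 : δ ≤ ε / (2 * (1 + C * (L + 2))) := min_le_right _ _
    calc δ * (1 + C*(L+2)) ≤ (ε / (2 * (1 + C * (L + 2)))) * (1 + C*(L+2)) :=
          mul_le_mul_of_nonneg_right h3 (le_of_lt hden)
      _ = ε / 2 := by field_simp
  have hfreq : ∃ᶠ x in l, h x < L + δ :=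
    Filter.frequently_lt_of_liminf_lt hcob (by linarith)
  obtain ⟨ρ, hρh, hρmem⟩ :=
    (hfreq.and_eventually (hmem (min δ ρ₀) (lt_min hδpos hρ₀))).exists
  have hρpos : 0 < ρ := hρmem.1
  have hρδ : ρ < δ := lt_of_lt_of_le hρmem.2 (min_le_left _ _)
  have hρρ₀ : ρ < ρ₀ := lt_of_lt_of_le hρmem.2 (min_le_right _ _)
  have hρnn : 0 ≤ h ρ := hnn ρ ⟨hρpos, hρρ₀⟩
  have hup : ∀ᶠ x in l, h x < L + ε := by
    filter_upwards [hmem (ρ/2) (by linarith)] with x hx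
    have h1 : h x ≤ (1 + C * ρ) * h ρ + C * ρ :=
      hmono x ρ hx.1 (by linarith [hx.2]) hρρ₀
    have hpos : (0:ℝ) < 1 + C * δ := by nlinarith
    have h2 : (1 + C * ρ) * h ρ + C * ρ < (1 + C * δ) * (L + δ) + C * δ := by
      nlinarith [mul_nonneg (mul_nonneg hC (sub_nonneg.2 hρδ.le)) hρnn,
        mul_lt_mul_of_pos_left hρh hpos,
        mul_le_mul_of_nonneg_left hρδ.le hC]
    have h3 : (1 + C * δ) * (L + δ) + C * δ ≤ L + δ * (1 + C * (L + 2)) := by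
      nlinarith [mul_nonneg (mul_nonneg hC hδpos.le) (sub_nonneg.2 hδ1)]
    linarith
  filter_upwards [hlow, hup] with x h1 h2
  rw [Real.dist_eq, abs_sub_lt_iff]
  constructor <;> linarith
end

section
/- Let n ≥ 1 and N ≥ 1 be integers and U ⊆ ℝ^N an open set. Let μ and μ_k (k ∈ ℕ) be Radon measures on U with μ_k → μ, in the sense that ∫ f dμ_k → ∫ f dμ for every continuous f : U → ℝ with compact support. Let x ∈ U, let x_k ∈ U with x_k → x, fix C ≥ 0 and r₀ > 0 with the closed Euclidean ball of radius 2r₀ about x contained in U and with |x_k − x| ≤ r₀ for all k. Assume that for every k and all 0 < σ < ρ ≤ r₀: σ^{−n}·μ_k(B_σ(x_k)) ≤ (1 + Cρ)·ρ^{−n}·μ_k(B_ρ(x_k)) + Cρ. Then the n-dimensional densities Θⁿ(μ_k, x_k) and Θⁿ(μ, x) all exist, and Θⁿ(μ, x) ≥ limsup_{k → ∞} Θⁿ(μ_k, x_k). -/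
open MeasureTheory Filter

noncomputable section

/-- `ω_n`: the Lebesgue volume of the unit ball of `ℝⁿ`. -/
def unitBallVol (n : ℕ) : ℝ :=
  (volume (Metric.ball (0 : EuclideanSpace ℝ (Fin n)) 1)).toReal

/-- The `n`-dimensional density ratio `μ(B_ρ(x)) / (ω_n ρⁿ)`. -/
def densRatio {N : ℕ} (n : ℕ) (μ : Measure (EuclideanSpace ℝ (Fin N)))
    (x : EuclideanSpace ℝ (Fin N)) (ρ : ℝ) : ℝ :=
  (μ (Metric.ball x ρ)).toReal / (unitBallVol n * ρ ^ n)

lemma tendsto_of_almostMono (f : ℝ → ℝ) (C r : ℝ) (hC : 0 ≤ C) (hr : 0 < r)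
    (hf0 : ∀ ρ, 0 < ρ → 0 ≤ f ρ)
    (h : ∀ σ ρ : ℝ, 0 < σ → σ < ρ → ρ ≤ r → f σ ≤ (1 + C * ρ) * f ρ + C * ρ) :
    ∃ d, Tendsto f (nhdsWithin 0 (Set.Ioi 0)) (nhds d) := by
  set l : Filter ℝ := nhdsWithin 0 (Set.Ioi 0) with hl
  have hlne : l.NeBot := nhdsGT_neBot 0
  have hIoo : ∀ t : ℝ, 0 < t → Set.Ioo (0:ℝ) t ∈ l := fun t ht =>
    Ioo_mem_nhdsGT_of_mem ⟨le_refl 0, ht⟩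
  set A : ℝ := (1 + C * r) * f r + C * r with hA
  have hfA : ∀ σ, 0 < σ → σ < r → f σ ≤ A := fun σ h1 h2 => h σ r h1 h2 le_rfl
  have hevA : ∀ᶠ ρ in l, f ρ ≤ A := by
    filter_upwards [hIoo r hr] with ρ hρ using hfA ρ hρ.1 hρ.2
  have hev0 : ∀ᶠ ρ in l, 0 ≤ f ρ := by
    filter_upwards [self_mem_nhdsWithin] with ρ hρ using hf0 ρ hρ
  have hbdd : IsBoundedUnder (· ≤ ·) l f := ⟨A, hevA⟩
  have hbddge : IsBoundedUnder (· ≥ ·) l f := ⟨0, hev0⟩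
  have hcob : IsCoboundedUnder (· ≤ ·) l f := hbddge.isCoboundedUnder_le
  have hcobge : IsCoboundedUnder (· ≥ ·) l f := hbdd.isCoboundedUnder_ge
  set L := limsup f l with hL
  have key : L ≤ liminf f l := by
    have hLle : ∀ ρ, 0 < ρ → ρ ≤ r → L ≤ (1 + C * ρ) * f ρ + C * ρ := by
      intro ρ h1 h2
      apply limsup_le_of_le hcob
      filter_upwards [hIoo ρ h1] with σ hσ using h σ ρ hσ.1 hσ.2 h2
    have hstep : ∀ ε : ℝ, 0 < ε → L - ε ≤ liminf f l := by
      intro ε hε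
      apply le_liminf_of_le hcobge
      have htend : Tendsto (fun ρ : ℝ => C * ρ * (A + 1)) l (nhds 0) := by
        have : Tendsto (fun ρ : ℝ => C * ρ * (A + 1)) (nhds 0) (nhds (C * 0 * (A + 1))) :=
          (((continuous_const.mul continuous_id).mul continuous_const).tendsto 0)
        simpa using this.mono_left nhdsWithin_le_nhds
      have hev : ∀ᶠ ρ in l, C * ρ * (A + 1) < ε := htend.eventually (eventually_lt_nhds hε)
      filter_upwards [hev, hIoo r hr] with ρ hρ hρ'
      have h1 := hLle ρ hρ'.1 hρ'.2.le
      have h2 : (1 + C * ρ) * f ρ + C * ρ ≤ f ρ + C * ρ * (A + 1) := by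
        have := hfA ρ hρ'.1 hρ'.2
        have hρpos : (0:ℝ) ≤ C * ρ := mul_nonneg hC hρ'.1.le
        nlinarith
      linarith
    by_contra hcon
    push_neg at hcon
    obtain ⟨ε, hε, hlt⟩ : ∃ ε > (0:ℝ), liminf f l < L - ε :=
      ⟨(L - liminf f l)/2, by linarith, by linarith⟩
    exact absurd (hstep ε hε) (not_le.mpr hlt)
  exact ⟨L, tendsto_of_le_liminf_of_limsup_le key le_rfl hbdd hbddge⟩

lemma integrable_of_bound {α : Type*} [MeasurableSpace α] [TopologicalSpace α]
    [OpensMeasurableSpace α] (μ : Measure α) (φ : α → ℝ) (hφ : Continuous φ)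
    (K : Set α) (hK : MeasurableSet K) (hsupp : ∀ a ∉ K, φ a = 0)
    (hb : ∀ a, |φ a| ≤ 1) (hμK : μ K ≠ ⊤) : Integrable φ μ := by
  refine ⟨hφ.aestronglyMeasurable, ?_⟩
  rw [HasFiniteIntegral]
  calc ∫⁻ a, ‖φ a‖₊ ∂μ ≤ ∫⁻ a, K.indicator (fun _ => (1 : ENNReal)) a ∂μ := by
        apply lintegral_mono
        intro a
        by_cases ha : a ∈ K
        · simp only [Set.indicator_of_mem ha]
          have h1 : ‖φ a‖ ≤ 1 := by simpa [Real.norm_eq_abs] using hb a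
          have : ‖φ a‖₊ ≤ (1 : NNReal) := by
            rw [← NNReal.coe_le_coe]; simpa using h1
          exact_mod_cast this
        · simp [Set.indicator_of_notMem ha, hsupp a ha]
    _ = μ K := by rw [lintegral_indicator hK]; simp
    _ < ⊤ := lt_top_iff_ne_top.mpr hμK

lemma meas_le_integral {α : Type*} [MeasurableSpace α] (μ : Measure α) (φ : α → ℝ)
    (hint : Integrable φ μ) (s : Set α) (hs : MeasurableSet s) (hμs : μ s ≠ ⊤)
    (h1 : ∀ a ∈ s, φ a = 1) (h0 : ∀ a, 0 ≤ φ a) :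
    (μ s).toReal ≤ ∫ a, φ a ∂μ := by
  have hind : Integrable (s.indicator (fun _ => (1:ℝ))) μ := by
    rw [integrable_indicator_iff hs]
    exact integrableOn_const hμs
  have heq : ∫ a, s.indicator (fun _ => (1:ℝ)) a ∂μ = (μ s).toReal := by
    rw [integral_indicator_const (1:ℝ) hs]; simp; rfl
  rw [← heq]
  refine integral_mono hind hint fun a => ?_
  by_cases ha : a ∈ s
  · simp [Set.indicator_of_mem ha, h1 a ha]
  · simp [Set.indicator_of_notMem ha, h0 a]

lemma integral_le_meas {α : Type*} [MeasurableSpace α] (μ : Measure α) (φ : α → ℝ)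
    (hint : Integrable φ μ) (s : Set α) (hs : MeasurableSet s) (hμs : μ s ≠ ⊤)
    (h1 : ∀ a, φ a ≤ 1) (h0 : ∀ a ∉ s, φ a ≤ 0) :
    ∫ a, φ a ∂μ ≤ (μ s).toReal := by
  have hind : Integrable (s.indicator (fun _ => (1:ℝ))) μ := by
    rw [integrable_indicator_iff hs]
    exact integrableOn_const hμs
  have heq : ∫ a, s.indicator (fun _ => (1:ℝ)) a ∂μ = (μ s).toReal := by
    rw [integral_indicator_const (1:ℝ) hs]; simp; rfl
  rw [← heq]
  refine integral_mono hint hind fun a => ?_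
  by_cases ha : a ∈ s
  · simp [Set.indicator_of_mem ha, h1 a]
  · simp [Set.indicator_of_notMem ha, h0 a ha]

set_option maxHeartbeats 2000000 in
/-- Upper semicontinuity of the `n`-dimensional density: if Radon measures
`μ_k → μ` weakly on an open set `U ⊆ ℝ^N`, `x_k → x`, and the normalized mass
ratios of the `μ_k` at `x_k` satisfy a uniform almost-monotonicity inequality,
then all the `n`-dimensional densities `Θⁿ(μ_k, x_k)` and `Θⁿ(μ, x)` exist and
`Θⁿ(μ, x) ≥ limsup_k Θⁿ(μ_k, x_k)`. -/
theorem density_upper_semicontinuous {N n : ℕ} (hN : 1 ≤ N) (hn : 1 ≤ n)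
    (U : Set (EuclideanSpace ℝ (Fin N))) (hU : IsOpen U)
    (μ : Measure (EuclideanSpace ℝ (Fin N)))
    (μk : ℕ → Measure (EuclideanSpace ℝ (Fin N)))
    (hμfin : ∀ K : Set (EuclideanSpace ℝ (Fin N)), K ⊆ U → IsCompact K → μ K ≠ ⊤)
    (hμkfin : ∀ k, ∀ K : Set (EuclideanSpace ℝ (Fin N)), K ⊆ U → IsCompact K →
      μk k K ≠ ⊤)
    (hconv : ∀ f : EuclideanSpace ℝ (Fin N) → ℝ, Continuous f →
      HasCompactSupport f → tsupport f ⊆ U →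
      Tendsto (fun k => ∫ y, f y ∂(μk k)) atTop (nhds (∫ y, f y ∂μ)))
    (x : EuclideanSpace ℝ (Fin N)) (hx : x ∈ U)
    (xk : ℕ → EuclideanSpace ℝ (Fin N)) (hxkU : ∀ k, xk k ∈ U)
    (hxk : Tendsto xk atTop (nhds x))
    (C r₀ : ℝ) (hC : 0 ≤ C) (hr₀ : 0 < r₀)
    (hball : Metric.closedBall x (2 * r₀) ⊆ U)
    (hxkr : ∀ k, dist (xk k) x ≤ r₀)
    (hmono : ∀ k, ∀ σ ρ : ℝ, 0 < σ → σ < ρ → ρ ≤ r₀ →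
      ((μk k) (Metric.ball (xk k) σ)).toReal / σ ^ n ≤
        (1 + C * ρ) * (((μk k) (Metric.ball (xk k) ρ)).toReal / ρ ^ n) + C * ρ) :
    ∃ d : ℝ, ∃ dk : ℕ → ℝ,
      Tendsto (fun ρ => densRatio n μ x ρ) (nhdsWithin 0 (Set.Ioi 0)) (nhds d) ∧
      (∀ k, Tendsto (fun ρ => densRatio n (μk k) (xk k) ρ)
        (nhdsWithin 0 (Set.Ioi 0)) (nhds (dk k))) ∧
      limsup dk atTop ≤ d := by
  classical
  set l : Filter ℝ := nhdsWithin 0 (Set.Ioi 0) with hldef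
  have hlne : l.NeBot := nhdsGT_neBot 0
  set K : Set (EuclideanSpace ℝ (Fin N)) := Metric.closedBall x (2*r₀) with hKdef
  have hKU : K ⊆ U := hball
  have hKc : IsCompact K := ProperSpace.isCompact_closedBall x (2*r₀)
  have hKm : MeasurableSet K := Metric.isClosed_closedBall.measurableSet
  have hμK : μ K ≠ ⊤ := hμfin K hKU hKc
  have hμkK : ∀ k, μk k K ≠ ⊤ := fun k => hμkfin k K hKU hKc
  have hsubx : ∀ t : ℝ, t ≤ 2*r₀ → Metric.ball x t ⊆ K := fun t ht =>
    Metric.ball_subset_closedBall.trans (Metric.closedBall_subset_closedBall ht)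
  have hsubxk : ∀ k, ∀ t : ℝ, t ≤ r₀ → Metric.ball (xk k) t ⊆ K := by
    intro k t ht y hy
    rw [Metric.mem_ball] at hy
    have h1 : dist y x ≤ dist y (xk k) + dist (xk k) x := dist_triangle _ _ _
    have := hxkr k
    rw [hKdef, Metric.mem_closedBall]
    linarith
  have hGfin : ∀ t : ℝ, t ≤ 2*r₀ → μ (Metric.ball x t) ≠ ⊤ := fun t ht =>
    ne_top_of_le_ne_top hμK (measure_mono (hsubx t ht))
  have hFfin : ∀ k, ∀ t : ℝ, t ≤ r₀ → μk k (Metric.ball (xk k) t) ≠ ⊤ := fun k t ht =>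
    ne_top_of_le_ne_top (hμkK k) (measure_mono (hsubxk k t ht))
  have hFxfin : ∀ k, ∀ t : ℝ, t ≤ 2*r₀ → μk k (Metric.ball x t) ≠ ⊤ := fun k t ht =>
    ne_top_of_le_ne_top (hμkK k) (measure_mono (hsubx t ht))
  -- bump functions
  have bump : ∀ a b : ℝ, 0 < a → a < b → b ≤ 2*r₀ →
      ∃ φ : EuclideanSpace ℝ (Fin N) → ℝ, Continuous φ ∧ HasCompactSupport φ ∧
        tsupport φ ⊆ Metric.ball x b ∧ (∀ y ∈ Metric.closedBall x a, φ y = 1) ∧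
        (∀ y, 0 ≤ φ y ∧ φ y ≤ 1) ∧ tsupport φ ⊆ U := by
    intro a b ha hab hb
    have hcl : IsCompact (closure (Metric.ball x b)) :=
      (ProperSpace.isCompact_closedBall x b).of_isClosed_subset isClosed_closure
        Metric.closure_ball_subset_closedBall
    obtain ⟨φ, hsupp, heq, hIcc⟩ := exists_tsupport_one_of_isOpen_isClosed
      (Metric.isOpen_ball (x := x) (ε := b)) hcl Metric.isClosed_closedBall
      (Metric.closedBall_subset_ball hab)
    have hcs : HasCompactSupport (⇑φ) :=
      (ProperSpace.isCompact_closedBall x b).of_isClosed_subset (isClosed_tsupport _)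
        (hsupp.trans Metric.ball_subset_closedBall)
    refine ⟨⇑φ, φ.continuous, hcs, hsupp, fun y hy => heq hy, fun y => ⟨(hIcc y).1, (hIcc y).2⟩,
      hsupp.trans ((hsubx b hb).trans hKU)⟩
  have hint : ∀ (φ : EuclideanSpace ℝ (Fin N) → ℝ), Continuous φ →
      tsupport φ ⊆ K → (∀ y, 0 ≤ φ y ∧ φ y ≤ 1) →
      ∀ (ν : Measure (EuclideanSpace ℝ (Fin N))), ν K ≠ ⊤ → Integrable φ ν := by
    intro φ hc hsupp h01 ν hν
    refine integrable_of_bound ν φ hc K hKm (fun a ha => ?_) (fun a => ?_) hν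
    · exact image_eq_zero_of_notMem_tsupport (fun hmem => ha (hsupp hmem))
    · rw [abs_le]; exact ⟨by linarith [(h01 a).1], (h01 a).2⟩
  -- portmanteau lower bound
  have B1 : ∀ s t : ℝ, 0 < s → s < t → t ≤ r₀ → ∀ ε : ℝ, 0 < ε →
      ∀ᶠ k in atTop, (μ (Metric.ball x s)).toReal ≤
        ((μk k) (Metric.ball (xk k) t)).toReal + ε := by
    intro s t hs hst ht ε hε
    obtain ⟨φ, hcont, hcs, hsupp, hone, h01, hsuppU⟩ :=
      bump s ((s+t)/2) hs (by linarith) (by linarith)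
    have hsuppK : tsupport φ ⊆ K := hsupp.trans (hsubx _ (by linarith))
    have hintμ : Integrable φ μ := hint φ hcont hsuppK h01 μ hμK
    have h1 : (μ (Metric.ball x s)).toReal ≤ ∫ y, φ y ∂μ := by
      refine meas_le_integral μ φ hintμ _ Metric.isOpen_ball.measurableSet
        (hGfin s (by linarith)) (fun a ha => hone a (Metric.ball_subset_closedBall ha))
        (fun a => (h01 a).1)
    have h2 : ∀ k, ∫ y, φ y ∂(μk k) ≤ ((μk k) (Metric.ball x ((s+t)/2))).toReal := by
      intro k
      refine integral_le_meas (μk k) φ (hint φ hcont hsuppK h01 (μk k) (hμkK k)) _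
        Metric.isOpen_ball.measurableSet (hFxfin k _ (by linarith))
        (fun a => (h01 a).2)
        (fun a ha => le_of_eq (image_eq_zero_of_notMem_tsupport (fun hmem => ha (hsupp hmem))))
    have h3 := hconv φ hcont hcs hsuppU
    have hev1 : ∀ᶠ k in atTop, dist (∫ y, φ y ∂(μk k)) (∫ y, φ y ∂μ) < ε :=
      Metric.tendsto_nhds.mp h3 ε hε
    have hev2 : ∀ᶠ k in atTop, dist (xk k) x < t - (s+t)/2 :=
      Metric.tendsto_nhds.mp hxk _ (by linarith)
    filter_upwards [hev1, hev2] with k hk1 hk2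
    have hsub : Metric.ball x ((s+t)/2) ⊆ Metric.ball (xk k) t := by
      intro y hy
      rw [Metric.mem_ball] at *
      have h4 : dist y (xk k) ≤ dist y x + dist x (xk k) := dist_triangle _ _ _
      rw [dist_comm x (xk k)] at h4
      linarith
    have h4 : ((μk k) (Metric.ball x ((s+t)/2))).toReal ≤
        ((μk k) (Metric.ball (xk k) t)).toReal :=
      ENNReal.toReal_mono (hFfin k t ht) (measure_mono hsub)
    rw [Real.dist_eq, abs_lt] at hk1
    linarith [h2 k]
  -- portmanteau upper bound
  have B2 : ∀ s t : ℝ, 0 < s → s < t → t ≤ r₀ → ∀ ε : ℝ, 0 < ε →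
      ∀ᶠ k in atTop, ((μk k) (Metric.ball (xk k) s)).toReal ≤
        (μ (Metric.ball x t)).toReal + ε := by
    intro s t hs hst ht ε hε
    obtain ⟨φ, hcont, hcs, hsupp, hone, h01, hsuppU⟩ :=
      bump ((s+t)/2) t (by linarith) (by linarith) (by linarith)
    have hsuppK : tsupport φ ⊆ K := hsupp.trans (hsubx _ (by linarith))
    have h2 : ∫ y, φ y ∂μ ≤ (μ (Metric.ball x t)).toReal := by
      refine integral_le_meas μ φ (hint φ hcont hsuppK h01 μ hμK) _
        Metric.isOpen_ball.measurableSet (hGfin t (by linarith)) (fun a => (h01 a).2)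
        (fun a ha => le_of_eq (image_eq_zero_of_notMem_tsupport (fun hmem => ha (hsupp hmem))))
    have h3 := hconv φ hcont hcs hsuppU
    have hev1 : ∀ᶠ k in atTop, dist (∫ y, φ y ∂(μk k)) (∫ y, φ y ∂μ) < ε :=
      Metric.tendsto_nhds.mp h3 ε hε
    have hev2 : ∀ᶠ k in atTop, dist (xk k) x < (s+t)/2 - s :=
      Metric.tendsto_nhds.mp hxk _ (by linarith)
    filter_upwards [hev1, hev2] with k hk1 hk2
    have h1 : ((μk k) (Metric.ball (xk k) s)).toReal ≤ ∫ y, φ y ∂(μk k) := by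
      refine meas_le_integral (μk k) φ (hint φ hcont hsuppK h01 (μk k) (hμkK k)) _
        Metric.isOpen_ball.measurableSet (hFfin k s (by linarith)) (fun a ha => ?_)
        (fun a => (h01 a).1)
      refine hone a ?_
      rw [Metric.mem_ball] at ha
      rw [Metric.mem_closedBall]
      have h4 : dist a x ≤ dist a (xk k) + dist (xk k) x := dist_triangle _ _ _
      linarith
    rw [Real.dist_eq, abs_lt] at hk1
    linarith
  have hone_div : Tendsto (fun j : ℕ => (1:ℝ)/((j:ℝ)+1)) atTop (nhds 0) :=
    tendsto_one_div_add_atTop_nhds_zero_nat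
  have hcast2 : ∀ j : ℕ, (1:ℝ) < (j:ℝ)+2 := by
    intro j; have := Nat.cast_nonneg (α := ℝ) j; linarith
  have hu2 : Tendsto (fun j : ℕ => ((j:ℝ)+2)⁻¹) atTop (nhds 0) :=
    (tendsto_atTop_add_const_right atTop 2 tendsto_natCast_atTop_atTop).inv_tendsto_atTop
  have huc : ∀ c : ℝ, Tendsto (fun j : ℕ => c/((j:ℝ)+2)) atTop (nhds 0) := by
    intro c
    simpa [div_eq_mul_inv] using tendsto_const_nhds.mul hu2
  -- almost monotonicity for the limit measure
  have hGmono : ∀ σ ρ : ℝ, 0 < σ → σ < ρ → ρ ≤ r₀ →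
      (μ (Metric.ball x σ)).toReal / σ ^ n ≤
        (1 + C * ρ) * ((μ (Metric.ball x ρ)).toReal / ρ ^ n) + C * ρ := by
    intro σ ρ hσ hσρ hρ
    have hδ : 0 < (ρ - σ)/2 := by linarith
    have inner : ∀ t ε : ℝ, 0 < t → t < (ρ - σ)/2 → 0 < ε →
        (μ (Metric.ball x σ)).toReal ≤
          (σ+t)^n * ((1 + C*(ρ-t)) * (((μ (Metric.ball x ρ)).toReal + ε)/(ρ-t)^n)
            + C*(ρ-t)) + ε := by
      intro t ε ht htδ hε
      have hst : σ + t < ρ - t := by linarith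
      have h1 := B1 σ (σ+t) hσ (by linarith) (by linarith) ε hε
      have h2 := B2 (ρ-t) ρ (by linarith) (by linarith) hρ ε hε
      obtain ⟨k, hk1, hk2⟩ := (h1.and h2).exists
      have h3 := hmono k (σ+t) (ρ-t) (by linarith) hst (by linarith)
      have hpow : (0:ℝ) < (σ+t)^n := pow_pos (by linarith) n
      have hpow2 : (0:ℝ) < (ρ-t)^n := pow_pos (by linarith) n
      have h4 : ((μk k) (Metric.ball (xk k) (σ+t))).toReal ≤
          (σ+t)^n * ((1 + C*(ρ-t)) *
            (((μk k) (Metric.ball (xk k) (ρ-t))).toReal/(ρ-t)^n) + C*(ρ-t)) := by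
        have h5 := (div_le_iff₀ hpow).mp h3
        linarith [h5, mul_comm ((1 + C*(ρ-t)) *
          (((μk k) (Metric.ball (xk k) (ρ-t))).toReal/(ρ-t)^n) + C*(ρ-t)) ((σ+t)^n)]
      have hCnn : (0:ℝ) ≤ 1 + C*(ρ-t) := by
        have : (0:ℝ) ≤ C*(ρ-t) := mul_nonneg hC (by linarith)
        linarith
      calc (μ (Metric.ball x σ)).toReal
          ≤ ((μk k) (Metric.ball (xk k) (σ+t))).toReal + ε := hk1
        _ ≤ (σ+t)^n * ((1 + C*(ρ-t)) *
            (((μk k) (Metric.ball (xk k) (ρ-t))).toReal/(ρ-t)^n) + C*(ρ-t)) + ε := by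
            linarith
        _ ≤ (σ+t)^n * ((1 + C*(ρ-t)) *
            (((μ (Metric.ball x ρ)).toReal + ε)/(ρ-t)^n) + C*(ρ-t)) + ε := by
            gcongr
    have key : (μ (Metric.ball x σ)).toReal ≤
        σ^n * ((1 + C*ρ) * ((μ (Metric.ball x ρ)).toReal/ρ^n) + C*ρ) := by
      have hu := huc ((ρ - σ)/2)
      have hb1 : Tendsto (fun j : ℕ => σ + ((ρ - σ)/2)/((j:ℝ)+2)) atTop (nhds σ) := by
        simpa using tendsto_const_nhds.add hu
      have hb2 : Tendsto (fun j : ℕ => ρ - ((ρ - σ)/2)/((j:ℝ)+2)) atTop (nhds ρ) := by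
        simpa using tendsto_const_nhds.sub hu
      have hρn : (ρ:ℝ)^n ≠ 0 := ne_of_gt (pow_pos (by linarith) n)
      have htend : Tendsto (fun j : ℕ =>
          (σ + ((ρ - σ)/2)/((j:ℝ)+2))^n * ((1 + C*(ρ - ((ρ - σ)/2)/((j:ℝ)+2))) *
            (((μ (Metric.ball x ρ)).toReal + 1/((j:ℝ)+1))/(ρ - ((ρ - σ)/2)/((j:ℝ)+2))^n)
            + C*(ρ - ((ρ - σ)/2)/((j:ℝ)+2))) + 1/((j:ℝ)+1))
          atTop (nhds (σ^n * ((1 + C*ρ) * ((μ (Metric.ball x ρ)).toReal/ρ^n) + C*ρ))) := by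
        have t1 := hb1.pow n
        have t2 := (tendsto_const_nhds (x := (1:ℝ))).add ((tendsto_const_nhds (x := C)).mul hb2)
        have t3 := ((tendsto_const_nhds (x := (μ (Metric.ball x ρ)).toReal)).add
          hone_div).div (hb2.pow n) hρn
        have := (t1.mul ((t2.mul t3).add ((tendsto_const_nhds (x := C)).mul hb2))).add hone_div
        simpa using this
      refine ge_of_tendsto' htend fun j => ?_
      have hjδ : ((ρ - σ)/2)/((j:ℝ)+2) < (ρ - σ)/2 := div_lt_self hδ (hcast2 j)
      have hjpos : 0 < ((ρ - σ)/2)/((j:ℝ)+2) := by positivity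
      exact inner _ _ hjpos hjδ (by positivity)
    rw [div_le_iff₀ (pow_pos hσ n), mul_comm]
    exact key
  -- existence of the densities
  obtain ⟨e, he⟩ := tendsto_of_almostMono
    (fun ρ => (μ (Metric.ball x ρ)).toReal / ρ^n) C r₀ hC hr₀
    (fun ρ hρ => div_nonneg ENNReal.toReal_nonneg (pow_nonneg hρ.le n)) hGmono
  have hekex : ∀ k, ∃ d, Tendsto
      (fun ρ => ((μk k) (Metric.ball (xk k) ρ)).toReal / ρ^n)
      (nhdsWithin 0 (Set.Ioi 0)) (nhds d) :=
    fun k => tendsto_of_almostMono _ C r₀ hC hr₀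
      (fun ρ hρ => div_nonneg ENNReal.toReal_nonneg (pow_nonneg hρ.le n)) (hmono k)
  choose ek hek using hekex
  have heknn : ∀ k, 0 ≤ ek k := by
    intro k
    refine ge_of_tendsto (hek k) ?_
    filter_upwards [self_mem_nhdsWithin] with ρ hρ
    exact div_nonneg ENNReal.toReal_nonneg (pow_nonneg (le_of_lt (Set.mem_Ioi.mp hρ)) n)
  have hevbound : ∀ ρ'' ρ : ℝ, 0 < ρ'' → ρ'' < ρ → ρ ≤ r₀ → ∀ ε : ℝ, 0 < ε →
      ∀ᶠ k in atTop, ek k ≤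
        (1 + C*ρ'') * (((μ (Metric.ball x ρ)).toReal + ε)/ρ''^n) + C*ρ'' := by
    intro ρ'' ρ h1 h2 h3 ε hε
    have hstep : ∀ k, ek k ≤ (1 + C*ρ'') *
        (((μk k) (Metric.ball (xk k) ρ'')).toReal/ρ''^n) + C*ρ'' := by
      intro k
      refine le_of_tendsto (hek k) ?_
      filter_upwards [Ioo_mem_nhdsGT_of_mem ⟨le_refl (0:ℝ), h1⟩] with σ hσ
      exact hmono k σ ρ'' hσ.1 hσ.2 (by linarith)
    filter_upwards [B2 ρ'' ρ h1 h2 h3 ε hε] with k hk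
    refine (hstep k).trans ?_
    have hCnn : (0:ℝ) ≤ 1 + C*ρ'' := by
      have : (0:ℝ) ≤ C*ρ'' := mul_nonneg hC h1.le
      linarith
    gcongr
  have hbddek : IsBoundedUnder (· ≤ ·) atTop ek :=
    ⟨_, hevbound (r₀/2) r₀ (by linarith) (by linarith) le_rfl 1 one_pos⟩
  have hcobek : IsCoboundedUnder (· ≤ ·) atTop ek := by
    have hge : IsBoundedUnder (· ≥ ·) atTop ek := isBoundedUnder_of ⟨0, heknn⟩
    exact hge.isCoboundedUnder_le
  have hii : ∀ ρ : ℝ, 0 < ρ → ρ ≤ r₀ →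
      limsup ek atTop ≤ (1 + C*ρ) * ((μ (Metric.ball x ρ)).toReal/ρ^n) + C*ρ := by
    intro ρ hρ hρr
    have hu := huc ρ
    have hb2 : Tendsto (fun j : ℕ => ρ - ρ/((j:ℝ)+2)) atTop (nhds ρ) := by
      simpa using tendsto_const_nhds.sub hu
    have hρn : (ρ:ℝ)^n ≠ 0 := ne_of_gt (pow_pos hρ n)
    have htend : Tendsto (fun j : ℕ =>
        (1 + C*(ρ - ρ/((j:ℝ)+2))) *
          (((μ (Metric.ball x ρ)).toReal + 1/((j:ℝ)+1))/(ρ - ρ/((j:ℝ)+2))^n)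
          + C*(ρ - ρ/((j:ℝ)+2)))
        atTop (nhds ((1 + C*ρ) * ((μ (Metric.ball x ρ)).toReal/ρ^n) + C*ρ)) := by
      have t2 := (tendsto_const_nhds (x := (1:ℝ))).add ((tendsto_const_nhds (x := C)).mul hb2)
      have t3 := ((tendsto_const_nhds (x := (μ (Metric.ball x ρ)).toReal)).add
        hone_div).div (hb2.pow n) hρn
      have := (t2.mul t3).add ((tendsto_const_nhds (x := C)).mul hb2)
      simpa using this
    refine ge_of_tendsto' htend fun j => ?_
    have h0 : 0 < ρ/((j:ℝ)+2) := by positivity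
    have hjlt : ρ/((j:ℝ)+2) < ρ := div_lt_self hρ (hcast2 j)
    have hjpos : 0 < ρ - ρ/((j:ℝ)+2) := by linarith
    refine limsup_le_of_le hcobek
      (hevbound (ρ - ρ/((j:ℝ)+2)) ρ hjpos (by linarith) hρr (1/((j:ℝ)+1)) (by positivity))
  have hCt : Tendsto (fun ρ : ℝ => C*ρ) (nhdsWithin 0 (Set.Ioi 0)) (nhds 0) := by
    have h : Tendsto (fun ρ : ℝ => C*ρ) (nhds 0) (nhds (C*0)) :=
      (continuous_const.mul continuous_id).tendsto 0
    simpa using h.mono_left nhdsWithin_le_nhds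
  have hh : Tendsto (fun ρ : ℝ =>
      (1 + C*ρ) * ((μ (Metric.ball x ρ)).toReal/ρ^n) + C*ρ)
      (nhdsWithin 0 (Set.Ioi 0)) (nhds e) := by
    have := (((tendsto_const_nhds (x := (1:ℝ))).add hCt).mul he).add hCt
    simpa using this
  have hlimsupe : limsup ek atTop ≤ e := by
    refine ge_of_tendsto hh ?_
    filter_upwards [Ioc_mem_nhdsGT_of_mem ⟨le_refl (0:ℝ), hr₀⟩] with ρ hρ
    exact hii ρ hρ.1 hρ.2
  -- packaging
  have hω : 0 < unitBallVol n := by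
    rw [unitBallVol]
    apply ENNReal.toReal_pos
    · exact (Metric.measure_ball_pos volume 0 one_pos).ne'
    · exact measure_ball_lt_top.ne
  refine ⟨e / unitBallVol n, fun k => ek k / unitBallVol n, ?_, ?_, ?_⟩
  · have hrw : (fun ρ => densRatio n μ x ρ) =
        fun ρ => ((μ (Metric.ball x ρ)).toReal/ρ^n) / unitBallVol n := by
      funext ρ; rw [densRatio, mul_comm, ← div_div]
    rw [hrw]; exact he.div_const _
  · intro k
    have hrw : (fun ρ => densRatio n (μk k) (xk k) ρ) =
        fun ρ => (((μk k) (Metric.ball (xk k) ρ)).toReal/ρ^n) / unitBallVol n := by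
      funext ρ; rw [densRatio, mul_comm, ← div_div]
    rw [hrw]; exact (hek k).div_const _
  · have hge' : IsBoundedUnder (· ≥ ·) atTop (fun k => ek k / unitBallVol n) :=
      isBoundedUnder_of ⟨0, fun (k : ℕ) => div_nonneg (heknn k) hω.le⟩
    have hcob' : IsCoboundedUnder (· ≤ ·) atTop (fun k => ek k / unitBallVol n) :=
      hge'.isCoboundedUnder_le
    have key : ∀ c : ℝ, e < c →
        limsup (fun k => ek k / unitBallVol n) atTop ≤ c / unitBallVol n := by
      intro c hc
      have hev := eventually_lt_of_limsup_lt (lt_of_le_of_lt hlimsupe hc) hbddek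
      refine limsup_le_of_le hcob' ?_
      filter_upwards [hev] with k hk
      have := hk.le
      gcongr
    have htend : Tendsto (fun j : ℕ => (e + 1/((j:ℝ)+1)) / unitBallVol n) atTop
        (nhds (e / unitBallVol n)) := by
      simpa using (tendsto_const_nhds.add hone_div).div_const (unitBallVol n)
    refine ge_of_tendsto' htend fun j => key _ ?_
    have : (0:ℝ) < 1/((j:ℝ)+1) := by positivity
    linarith

end
end
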